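/- arXiv:1910.01633 — 3 statements merged into one kernel-verified Lean document; each statement's English description precedes it below -/
import Mathlib

section
/- Let Q be a connected quiver, θ : V → ℝ with Σ_{i∈V} θ_i = 0, and T a spanning tree of Q. For e ∈ T set w_e := Σ_{j ∈ T_{h(e)}} θ_j. Then for every vertex i ∈ V: Σ_{e ∈ T, h(e) = i} w_e − Σ_{e ∈ T, t(e) = i} w_e = θ_i. -/
open Classical Finset

noncomputable section

/-- The equivalence relation on vertices generated by the edges in `D`:
`t e` and `h e` are related for every `e ∈ D`. -/
def joinedRel {V E : Type} (tl hd : E → V) (D : Set E) : V → V → Prop :=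
  Relation.EqvGen fun a b => ∃ e ∈ D, (tl e = a ∧ hd e = b) ∨ (tl e = b ∧ hd e = a)

/-- The graph `(V, D)` is connected. -/
def IsConn {V E : Type} (tl hd : E → V) (D : Set E) : Prop :=
  ∀ a b : V, joinedRel tl hd D a b

/-- `T ⊆ E` is a spanning tree: `(V, T)` is connected and `#T = #V - 1`. -/
def IsSpanningTree {V E : Type} [Fintype V] (tl hd : E → V) (T : Finset E) : Prop :=
  IsConn tl hd ↑T ∧ T.card + 1 = Fintype.card V

/-- The connected component of the vertex `v` in the graph with edge set `D`. -/
def component {V E : Type} [Fintype V] (tl hd : E → V) (D : Finset E) (v : V) : Finset V :=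
  Finset.univ.filter fun j => joinedRel tl hd (↑D) v j

/-- Genericity of a stability parameter. -/
def Generic {V : Type} [Fintype V] (θ : V → ℝ) : Prop :=
  ∀ J : Finset V, J.Nonempty → J ≠ Finset.univ → ∑ i ∈ J, θ i ≠ 0

/-- Auxiliary recursion computing the external activity: `S` is the set of remaining
edges and `C` the set of already contracted edges (an edge of the current, partially
contracted, quiver is a loop iff its endpoints are joined by edges of `C`).  At each
step the largest non-loop edge is contracted (if it lies in `T`) or deleted (otherwise);
once no non-loop edge remains (i.e. the contracted quiver has one vertex), the number of
remaining (loop) edges is returned. -/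
def extactAux {V E : Type} [LinearOrder E] (tl hd : E → V) (T : Finset E)
    (S C : Finset E) : ℕ :=
  if hne : (S.filter fun e => ¬ joinedRel tl hd (↑C) (tl e) (hd e)).Nonempty then
    if (S.filter fun e => ¬ joinedRel tl hd (↑C) (tl e) (hd e)).max' hne ∈ T then
      extactAux tl hd T
        (S.erase ((S.filter fun e => ¬ joinedRel tl hd (↑C) (tl e) (hd e)).max' hne))
        (insert ((S.filter fun e => ¬ joinedRel tl hd (↑C) (tl e) (hd e)).max' hne) C)
    else
      extactAux tl hd T
        (S.erase ((S.filter fun e => ¬ joinedRel tl hd (↑C) (tl e) (hd e)).max' hne)) C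
  else S.card
termination_by S.card
decreasing_by
  · exact Finset.card_lt_card (Finset.erase_ssubset
      (Finset.mem_of_mem_filter _ (Finset.max'_mem _ hne)))
  · exact Finset.card_lt_card (Finset.erase_ssubset
      (Finset.mem_of_mem_filter _ (Finset.max'_mem _ hne)))

/-- The external activity `extact(Q, T)` of a spanning tree `T`, with respect to a fixed
linear order on the edges. -/
def extact {V E : Type} [Fintype E] [LinearOrder E] (tl hd : E → V) (T : Finset E) : ℕ :=
  extactAux tl hd T Finset.univ ∅

/-- Isomorphism of toric representations. -/
def IsoRep {V E k : Type} [Field k] (tl hd : E → V) (x x' : E → k) : Prop :=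
  ∃ g : V → kˣ, ∀ e, x' e = (g (hd e) : k) * x e * ((g (tl e) : k))⁻¹

/-- Gauge equivalence (the `(kˣ)^V`-action) for representations of the double quiver. -/
def GaugeEquiv {V E k : Type} [Field k] (tl hd : E → V) (x xs x' xs' : E → k) : Prop :=
  ∃ g : V → kˣ,
    (∀ e, x' e = (g (hd e) : k) * x e * ((g (tl e) : k))⁻¹) ∧
    (∀ e, xs' e = (g (tl e) : k) * xs e * ((g (hd e) : k))⁻¹)

/-- The moment map equations for the parameter `lam`. -/
def MomentMap {V E k : Type} [Fintype E] [Field k] (tl hd : E → V) (lam : V → k)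
    (x xs : E → k) : Prop :=
  ∀ i : V,
    (∑ e ∈ Finset.univ.filter fun e => hd e = i, x e * xs e) -
      (∑ e ∈ Finset.univ.filter fun e => tl e = i, x e * xs e) = lam i

/-- `J` is closed for `(x, xs)`, with only the conditions for edges in `S` imposed. -/
def ClosedOn {V E k : Type} [Zero k] (tl hd : E → V) (x xs : E → k) (S : Set E)
    (J : Finset V) : Prop :=
  ∀ e ∈ S, (x e ≠ 0 → tl e ∈ J → hd e ∈ J) ∧ (xs e ≠ 0 → hd e ∈ J → tl e ∈ J)

/-- `θ`-stability of `(x, xs)` on the subquiver with vertex set `W` and edge set `S`. -/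
def StableSub {V E k : Type} [Zero k] (tl hd : E → V) (θ : V → ℝ) (x xs : E → k)
    (W : Finset V) (S : Set E) : Prop :=
  ∀ J : Finset V, J ⊆ W → ClosedOn tl hd x xs S J → J.Nonempty → J ≠ W →
    0 < ∑ i ∈ J, θ i

/-- Destabilising subsets for `(x, xs)` on the subquiver `(W, S)`. -/
def DestabSub {V E k : Type} [Zero k] (tl hd : E → V) (θ : V → ℝ) (x xs : E → k)
    (W : Finset V) (S : Set E) (J : Finset V) : Prop :=
  J ⊆ W ∧ J.Nonempty ∧ J ≠ W ∧ ClosedOn tl hd x xs S J ∧ ∑ i ∈ J, θ i ≤ 0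

/-- The projection identifying the vertex `a` with the vertex `b`, i.e. the quotient map
`V → V/e` for the contraction of an edge with tail `a` and head `b` (the quotient being
modelled on the subtype of vertices different from `a`). -/
def cProj {V : Type} (a b : V) (h : b ≠ a) (i : V) : {j : V // j ≠ a} :=
  if hi : i = a then ⟨b, h⟩ else ⟨i, hi⟩

/-- Tail map of the contracted quiver `Q/e`. -/
def contractTl {V E : Type} (tl hd : E → V) (e : E) (h : hd e ≠ tl e)
    (f : {f : E // f ≠ e}) : {j : V // j ≠ tl e} := cProj (tl e) (hd e) h (tl f.1)

/-- Head map of the contracted quiver `Q/e`. -/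
def contractHd {V E : Type} (tl hd : E → V) (e : E) (h : hd e ≠ tl e)
    (f : {f : E // f ≠ e}) : {j : V // j ≠ tl e} := cProj (tl e) (hd e) h (hd f.1)

/-- Contraction `θ/e` (or `λ/e`) of a parameter along the contraction of an edge with
tail `a` and head `b`: the new vertex `ι` (represented by `b`) gets the value
`θ a + θ b`, all other vertices keep their values. -/
def contractParam {V R : Type} [Add R] (a b : V) (θ : V → R) (j : {i : V // i ≠ a}) : R :=
  if (j : V) = b then θ a + θ b else θ (j : V)

/-- The graph of the tree-assignment recursion: `TreeAssign tl hd x xs W S θ T` means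
that the recursion, applied to the restriction of `(x, xs)` to the subquiver with vertex
set `W` and edge set `S` and with stability parameter `θ` (and the linear order induced
from `E`), produces the spanning tree `T`. -/
inductive TreeAssign {V E k : Type} [Fintype V] [LinearOrder E] [Zero k]
    (tl hd : E → V) (x xs : E → k) :
    Finset V → Finset E → (V → ℝ) → Finset E → Prop
  | base (W : Finset V) (S : Finset E) (θ : V → ℝ) (hW : W.card = 1) :
      TreeAssign tl hd x xs W S θ ∅
  | delete (W : Finset V) (S : Finset E) (θ : V → ℝ) (e : E)
      (he : e ∈ S) (hloop : tl e ≠ hd e)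
      (hsmall : ∀ f ∈ S, tl f ≠ hd f → e ≤ f)
      (hstab : StableSub tl hd θ x xs W ↑(S.erase e))
      (T : Finset E) (ih : TreeAssign tl hd x xs W (S.erase e) θ T) :
      TreeAssign tl hd x xs W S θ T
  | contract (W : Finset V) (S : Finset E) (θ : V → ℝ) (e : E) (a b : V)
      (he : e ∈ S) (hloop : tl e ≠ hd e)
      (hsmall : ∀ f ∈ S, tl f ≠ hd f → e ≤ f)
      (hab : (a = tl e ∧ b = hd e) ∨ (a = hd e ∧ b = tl e))
      (J₁ : Finset V)
      (hJ₁ : DestabSub tl hd θ x xs W ↑(S.erase e) J₁)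
      (hall : ∀ J, DestabSub tl hd θ x xs W ↑(S.erase e) J → a ∈ J ∧ b ∉ J)
      (hmin : ∀ J, DestabSub tl hd θ x xs W ↑(S.erase e) J →
        ∑ i ∈ J₁, θ i ≤ ∑ i ∈ J, θ i)
      (T₁ T₂ : Finset E)
      (ih₁ : TreeAssign tl hd x xs J₁ (S.filter fun f => tl f ∈ J₁ ∧ hd f ∈ J₁)
          (fun i => if i = a then θ i - ∑ j ∈ J₁, θ j
            else if i = b then θ i + ∑ j ∈ J₁, θ j else θ i) T₁)
      (ih₂ : TreeAssign tl hd x xs (W \ J₁)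
          (S.filter fun f => tl f ∈ W \ J₁ ∧ hd f ∈ W \ J₁)
          (fun i => if i = a then θ i - ∑ j ∈ J₁, θ j
            else if i = b then θ i + ∑ j ∈ J₁, θ j else θ i) T₂) :
      TreeAssign tl hd x xs W S θ (insert e (T₁ ∪ T₂))

/-- Points of the cell `M_T`: `θ`-stable pairs satisfying the moment map equations whose
assigned spanning tree is `T`. -/
def CellPt {V E k : Type} [Fintype V] [Fintype E] [LinearOrder E] [Field k]
    (tl hd : E → V) (lam : V → k) (θ : V → ℝ) (T : Finset E) : Type :=
  {p : (E → k) × (E → k) //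
    StableSub tl hd θ p.1 p.2 Finset.univ Set.univ ∧
    MomentMap tl hd lam p.1 p.2 ∧
    TreeAssign tl hd p.1 p.2 Finset.univ Finset.univ θ T}

/-- The cell `M_T` of the Nakajima orbit set: `(kˣ)^V`-orbits of points. -/
def Cell {V E k : Type} [Fintype V] [Fintype E] [LinearOrder E] [Field k]
    (tl hd : E → V) (lam : V → k) (θ : V → ℝ) (T : Finset E) : Type :=
  Quot fun p q : CellPt tl hd lam θ T => GaugeEquiv tl hd p.1.1 p.1.2 q.1.1 q.1.2


set_option linter.unusedSectionVars false

section Aux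

variable {V E : Type} [Fintype V] {tl hd : E → V}

lemma jr_refl (D : Set E) (a : V) : joinedRel tl hd D a a := Relation.EqvGen.refl a

lemma jr_symm {D : Set E} {a b : V} (h : joinedRel tl hd D a b) : joinedRel tl hd D b a :=
  Relation.EqvGen.symm a b h

lemma jr_trans {D : Set E} {a b c : V} (h : joinedRel tl hd D a b)
    (h' : joinedRel tl hd D b c) : joinedRel tl hd D a c :=
  Relation.EqvGen.trans a b c h h'

lemma jr_edge {D : Set E} {e : E} (he : e ∈ D) : joinedRel tl hd D (tl e) (hd e) :=
  Relation.EqvGen.rel _ _ ⟨e, he, Or.inl ⟨rfl, rfl⟩⟩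

lemma jr_mono {D D' : Set E} (h : D ⊆ D') {a b : V} (hab : joinedRel tl hd D a b) :
    joinedRel tl hd D' a b :=
  Relation.EqvGen.mono (fun a b ⟨e, he, ho⟩ => ⟨e, h he, ho⟩) a b hab

lemma jr_eq_of_empty {a b : V} (h : joinedRel tl hd (∅ : Set E) a b) : a = b := by
  induction h with
  | rel x y hxy => obtain ⟨e, he, -⟩ := hxy; exact absurd he (Set.notMem_empty e)
  | refl x => rfl
  | symm x y _ ih => exact ih.symm
  | trans x y z _ _ ih1 ih2 => exact ih1.trans ih2

lemma jr_insert {D : Set E} {e : E} {a b : V} (h : joinedRel tl hd (insert e D) a b) :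
    joinedRel tl hd D a b ∨
      ((joinedRel tl hd D a (tl e) ∨ joinedRel tl hd D a (hd e)) ∧
        (joinedRel tl hd D (tl e) b ∨ joinedRel tl hd D (hd e) b)) := by
  induction h with
  | rel x y hxy =>
      obtain ⟨f, hf, ho⟩ := hxy
      rcases Set.mem_insert_iff.mp hf with rfl | hf
      · rcases ho with ⟨hx, hy⟩ | ⟨hx, hy⟩
        · subst hx; subst hy
          exact Or.inr ⟨Or.inl (jr_refl _ _), Or.inr (jr_refl _ _)⟩
        · subst hx; subst hy
          exact Or.inr ⟨Or.inr (jr_refl _ _), Or.inl (jr_refl _ _)⟩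
      · exact Or.inl (Relation.EqvGen.rel x y ⟨f, hf, ho⟩)
  | refl x => exact Or.inl (jr_refl _ _)
  | symm x y _ ih =>
      rcases ih with h' | ⟨h1, h2⟩
      · exact Or.inl (jr_symm h')
      · exact Or.inr ⟨h2.imp jr_symm jr_symm, h1.imp jr_symm jr_symm⟩
  | trans x y z _ _ ih1 ih2 =>
      rcases ih1 with h1 | ⟨ha, hb⟩
      · rcases ih2 with h2 | ⟨hb', hc⟩
        · exact Or.inl (jr_trans h1 h2)
        · exact Or.inr ⟨hb'.imp (jr_trans h1) (jr_trans h1), hc⟩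
      · rcases ih2 with h2 | ⟨hb', hc⟩
        · exact Or.inr ⟨ha, hb.imp (fun h => jr_trans h h2) (fun h => jr_trans h h2)⟩
        · exact Or.inr ⟨ha, hc⟩

lemma jr_insert_of_joined {D : Set E} {e : E} (hte : joinedRel tl hd D (tl e) (hd e))
    {a b : V} (h : joinedRel tl hd (insert e D) a b) : joinedRel tl hd D a b := by
  rcases jr_insert h with h' | ⟨h1, h2⟩
  · exact h'
  rcases h1 with h1 | h1 <;> rcases h2 with h2 | h2
  · exact jr_trans h1 h2
  · exact jr_trans h1 (jr_trans hte h2)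
  · exact jr_trans h1 (jr_trans (jr_symm hte) h2)
  · exact jr_trans h1 h2

lemma mem_component {D : Finset E} {v j : V} :
    j ∈ component tl hd D v ↔ joinedRel tl hd ↑D v j := by
  simp [component]

lemma coe_insert_erase {D : Finset E} {e : E} (he : e ∈ D) :
    (↑D : Set E) = insert e ↑(D.erase e) := by
  rw [← Finset.coe_insert, Finset.insert_erase he]

lemma coe_erase_subset (D : Finset E) (e : E) : (↑(D.erase e) : Set E) ⊆ ↑D := by
  intro f hf
  exact Finset.mem_coe.mpr (Finset.mem_of_mem_erase (Finset.mem_coe.mp hf))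

lemma comp_card_le : ∀ (D : Finset E) (v : V),
    (component tl hd D v).card ≤
      (D.filter fun f => joinedRel tl hd ↑D v (tl f)).card + 1 := by
  classical
  intro D
  induction D using Finset.strongInduction with
  | _ D ih =>
  intro v
  rcases D.eq_empty_or_nonempty with rfl | ⟨e, he⟩
  · have hsub : component tl hd (∅ : Finset E) v ⊆ {v} := by
      intro j hj
      rw [mem_component] at hj
      rw [Finset.mem_singleton]
      exact (jr_eq_of_empty (by simpa using hj)).symm
    calc (component tl hd (∅ : Finset E) v).card ≤ 1 := by
          simpa using Finset.card_le_card hsub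
      _ ≤ _ := Nat.le_add_left 1 _
  · have hsub : D.erase e ⊂ D := Finset.erase_ssubset he
    have hcoe : (↑D : Set E) = insert e ↑(D.erase e) := coe_insert_erase he
    have hmono : (↑(D.erase e) : Set E) ⊆ ↑D := coe_erase_subset D e
    by_cases hred : joinedRel tl hd ↑(D.erase e) (tl e) (hd e)
    · have hcomp : component tl hd D v = component tl hd (D.erase e) v := by
        ext j
        simp only [mem_component]
        constructor
        · intro h; exact jr_insert_of_joined hred (hcoe ▸ h)
        · intro h; exact jr_mono hmono h
      have hfil : ((D.erase e).filter fun f => joinedRel tl hd ↑(D.erase e) v (tl f)) ⊆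
          D.filter fun f => joinedRel tl hd ↑D v (tl f) := by
        intro f hf
        simp only [Finset.mem_filter] at hf ⊢
        exact ⟨Finset.mem_of_mem_erase hf.1, jr_mono hmono hf.2⟩
      rw [hcomp]
      exact (ih _ hsub v).trans (by
        exact Nat.add_le_add_right (Finset.card_le_card hfil) 1)
    · by_cases hv : joinedRel tl hd ↑D v (tl e)
      · -- component splits into the two sides of e
        have hcomp : component tl hd D v =
            component tl hd (D.erase e) (tl e) ∪ component tl hd (D.erase e) (hd e) := by
          ext j
          simp only [Finset.mem_union, mem_component]
          constructor
          · intro h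
            have h2 : joinedRel tl hd ↑D (tl e) j := jr_trans (jr_symm hv) h
            rw [hcoe] at h2
            rcases jr_insert h2 with h' | ⟨-, h3⟩
            · exact Or.inl h'
            · exact h3
          · rintro (h | h)
            · exact jr_trans hv (jr_mono hmono h)
            · exact jr_trans (jr_trans hv (jr_edge (Finset.mem_coe.mpr he))) (jr_mono hmono h)
        have hdisj : Disjoint (component tl hd (D.erase e) (tl e))
            (component tl hd (D.erase e) (hd e)) := by
          rw [Finset.disjoint_left]
          intro j h1 h2
          rw [mem_component] at h1 h2
          exact hred (jr_trans h1 (jr_symm h2))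
        have b1 := ih _ hsub (tl e)
        have b2 := ih _ hsub (hd e)
        set F1 := (D.erase e).filter fun f => joinedRel tl hd ↑(D.erase e) (tl e) (tl f) with hF1
        set F2 := (D.erase e).filter fun f => joinedRel tl hd ↑(D.erase e) (hd e) (tl f) with hF2
        have hdisjF : Disjoint F1 F2 := by
          rw [Finset.disjoint_left]
          intro f h1 h2
          rw [hF1, Finset.mem_filter] at h1
          rw [hF2, Finset.mem_filter] at h2
          exact hred (jr_trans h1.2 (jr_symm h2.2))
        have heF : e ∉ F1 ∪ F2 := by
          intro hmem
          rcases Finset.mem_union.mp hmem with h | h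
          · exact Finset.notMem_erase e D (Finset.mem_of_mem_filter _ h)
          · exact Finset.notMem_erase e D (Finset.mem_of_mem_filter _ h)
        have hsubF : insert e (F1 ∪ F2) ⊆ D.filter fun f => joinedRel tl hd ↑D v (tl f) := by
          intro f hf
          rcases Finset.mem_insert.mp hf with rfl | hf
          · exact Finset.mem_filter.mpr ⟨he, hv⟩
          · rcases Finset.mem_union.mp hf with h | h
            · rw [hF1, Finset.mem_filter] at h
              exact Finset.mem_filter.mpr ⟨Finset.mem_of_mem_erase h.1,
                jr_trans hv (jr_mono hmono h.2)⟩
            · rw [hF2, Finset.mem_filter] at h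
              exact Finset.mem_filter.mpr ⟨Finset.mem_of_mem_erase h.1,
                jr_trans (jr_trans hv (jr_edge (Finset.mem_coe.mpr he)))
                  (jr_mono hmono h.2)⟩
        calc (component tl hd D v).card
            = (component tl hd (D.erase e) (tl e)).card
              + (component tl hd (D.erase e) (hd e)).card := by
              rw [hcomp, Finset.card_union_of_disjoint hdisj]
          _ ≤ (F1.card + 1) + (F2.card + 1) := Nat.add_le_add b1 b2
          _ = (insert e (F1 ∪ F2)).card + 1 := by
              rw [Finset.card_insert_of_notMem heF, Finset.card_union_of_disjoint hdisjF]
              ring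
          _ ≤ _ := Nat.add_le_add_right (Finset.card_le_card hsubF) 1
      · -- v's component does not meet e
        have hcomp : component tl hd D v = component tl hd (D.erase e) v := by
          ext j
          simp only [mem_component]
          constructor
          · intro h
            rw [hcoe] at h
            rcases jr_insert h with h' | ⟨h1, -⟩
            · exact h'
            · exfalso
              rcases h1 with h1 | h1
              · exact hv (jr_mono hmono h1)
              · exact hv (jr_trans (jr_mono hmono h1) (jr_symm (jr_edge (Finset.mem_coe.mpr he))))
          · intro h; exact jr_mono hmono h
        have hfil : ((D.erase e).filter fun f => joinedRel tl hd ↑(D.erase e) v (tl f)) ⊆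
            D.filter fun f => joinedRel tl hd ↑D v (tl f) := by
          intro f hf
          simp only [Finset.mem_filter] at hf ⊢
          exact ⟨Finset.mem_of_mem_erase hf.1, jr_mono hmono hf.2⟩
        rw [hcomp]
        exact (ih _ hsub v).trans (Nat.add_le_add_right (Finset.card_le_card hfil) 1)

lemma card_le_of_isConn {D : Finset E} (v : V) (h : IsConn tl hd ↑D) :
    Fintype.card V ≤ D.card + 1 := by
  classical
  have hcomp : component tl hd D v = Finset.univ := by
    ext j
    simp only [mem_component, Finset.mem_univ, iff_true]
    exact h v j
  have := comp_card_le (tl := tl) (hd := hd) D v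
  rw [hcomp] at this
  calc Fintype.card V = (Finset.univ : Finset V).card := rfl
    _ ≤ _ := this.trans (Nat.add_le_add_right
        (Finset.card_le_card (Finset.filter_subset _ _)) 1)

lemma bridge {T : Finset E} (hT : IsSpanningTree tl hd T) {e : E} (he : e ∈ T) :
    ¬ joinedRel tl hd ↑(T.erase e) (tl e) (hd e) := by
  intro h
  have hconn : IsConn tl hd ↑(T.erase e) := by
    intro a b
    have hab := hT.1 a b
    rw [coe_insert_erase he] at hab
    exact jr_insert_of_joined h hab
  have hle := card_le_of_isConn (tl e) hconn
  rw [Finset.card_erase_add_one he] at hle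
  have := hT.2
  omega

lemma no_loop {T : Finset E} (hT : IsSpanningTree tl hd T) {e : E} (he : e ∈ T) :
    tl e ≠ hd e := by
  intro h
  exact bridge hT he (by rw [← h]; exact jr_refl _ _)

lemma cover {T : Finset E} (hT : IsSpanningTree tl hd T) {e : E} (he : e ∈ T) (j : V) :
    joinedRel tl hd ↑(T.erase e) (tl e) j ∨ joinedRel tl hd ↑(T.erase e) (hd e) j := by
  have h := hT.1 (tl e) j
  rw [coe_insert_erase he] at h
  rcases jr_insert h with h' | ⟨-, h2⟩
  · exact Or.inl h'
  · exact h2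

lemma exists_incident {D : Set E} {a b : V} (h : joinedRel tl hd D a b) :
    a = b ∨ ((∃ e ∈ D, tl e = a ∨ hd e = a) ∧ (∃ e ∈ D, tl e = b ∨ hd e = b)) := by
  induction h with
  | rel x y hxy =>
      obtain ⟨e, he, ho⟩ := hxy
      right
      rcases ho with ⟨h1, h2⟩ | ⟨h1, h2⟩
      · exact ⟨⟨e, he, Or.inl h1⟩, ⟨e, he, Or.inr h2⟩⟩
      · exact ⟨⟨e, he, Or.inr h2⟩, ⟨e, he, Or.inl h1⟩⟩
  | refl x => exact Or.inl rfl
  | symm x y _ ih =>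
      rcases ih with h' | ⟨h1, h2⟩
      · exact Or.inl h'.symm
      · exact Or.inr ⟨h2, h1⟩
  | trans x y z _ _ ih1 ih2 =>
      rcases ih1 with rfl | ⟨h1, h2⟩
      · exact ih2
      · rcases ih2 with rfl | ⟨h3, h4⟩
        · exact Or.inr ⟨h1, h2⟩
        · exact Or.inr ⟨h1, h4⟩

lemma exists_sep : ∀ (D : Finset E),
    (∀ e ∈ D, ¬ joinedRel tl hd ↑(D.erase e) (tl e) (hd e)) →
    ∀ i j : V, i ≠ j → joinedRel tl hd ↑D i j →
    ∃ e ∈ D, (tl e = i ∨ hd e = i) ∧ ¬ joinedRel tl hd ↑(D.erase e) i j := by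
  classical
  intro D
  induction D using Finset.strongInduction with
  | _ D ih =>
  intro hbr i j hij h
  obtain ⟨e0, he0, hinc⟩ : ∃ e ∈ (↑D : Set E), tl e = i ∨ hd e = i := by
    rcases exists_incident h with h' | ⟨h1, -⟩
    · exact absurd h' hij
    · exact h1
  have he0' : e0 ∈ D := Finset.mem_coe.mp he0
  by_cases hsep : joinedRel tl hd ↑(D.erase e0) i j
  · have hbr' : ∀ f ∈ D.erase e0,
        ¬ joinedRel tl hd ↑((D.erase e0).erase f) (tl f) (hd f) := by
      intro f hf hcon
      refine hbr f (Finset.mem_of_mem_erase hf) (jr_mono ?_ hcon)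
      intro g hg
      have hg' := Finset.mem_coe.mp hg
      rw [Finset.erase_right_comm] at hg'
      exact Finset.mem_coe.mpr (Finset.mem_of_mem_erase hg')
    obtain ⟨e1, he1, hinc1, hne1⟩ :=
      ih (D.erase e0) (Finset.erase_ssubset he0') hbr' i j hij hsep
    refine ⟨e1, Finset.mem_of_mem_erase he1, hinc1, ?_⟩
    intro hcon
    have hne01 : e0 ≠ e1 := by
      intro hEq
      exact Finset.notMem_erase e0 D (hEq ▸ he1)
    have h01 : e0 ∈ D.erase e1 := Finset.mem_erase.mpr ⟨hne01, he0'⟩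
    have hrw : (↑(D.erase e1) : Set E) = insert e0 ↑((D.erase e0).erase e1) := by
      rw [coe_insert_erase h01, Finset.erase_right_comm]
    rw [hrw] at hcon
    have hmono'' : (↑((D.erase e0).erase e1) : Set E) ⊆ ↑(D.erase e0) :=
      coe_erase_subset _ _
    rcases jr_insert hcon with h' | ⟨-, h2⟩
    · exact hne1 h'
    · rcases hinc with hi | hi <;> rcases h2 with h2 | h2
      · exact hne1 (hi ▸ h2)
      · exact hbr e0 he0' (jr_trans (hi ▸ hsep) (jr_symm (jr_mono hmono'' h2)))
      · exact hbr e0 he0' (jr_trans (jr_mono hmono'' h2) (jr_symm (hi ▸ hsep)))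
      · exact hne1 (hi ▸ h2)
  · exact ⟨e0, he0', hinc, hsep⟩

lemma uniq_sep {T : Finset E} (hT : IsSpanningTree tl hd T) {e f : E} {i j : V}
    (he : e ∈ T) (hf : f ∈ T) (hince : tl e = i ∨ hd e = i) (hincf : tl f = i ∨ hd f = i)
    (hsepe : ¬ joinedRel tl hd ↑(T.erase e) i j)
    (hsepf : ¬ joinedRel tl hd ↑(T.erase f) i j) :
    e = f := by
  by_contra hne
  obtain ⟨u, hu⟩ : ∃ u, (tl e = i ∧ hd e = u) ∨ (tl e = u ∧ hd e = i) := by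
    rcases hince with h | h
    · exact ⟨hd e, Or.inl ⟨h, rfl⟩⟩
    · exact ⟨tl e, Or.inr ⟨rfl, h⟩⟩
  obtain ⟨w, hw⟩ : ∃ w, (tl f = i ∧ hd f = w) ∨ (tl f = w ∧ hd f = i) := by
    rcases hincf with h | h
    · exact ⟨hd f, Or.inl ⟨h, rfl⟩⟩
    · exact ⟨tl f, Or.inr ⟨rfl, h⟩⟩
  have hcovu : joinedRel tl hd ↑(T.erase e) u j := by
    rcases cover hT he j with h | h <;> rcases hu with ⟨h1, h2⟩ | ⟨h1, h2⟩
    · exact absurd (h1 ▸ h) hsepe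
    · exact h1 ▸ h
    · exact h2 ▸ h
    · exact absurd (h2 ▸ h) hsepe
  have hcovw : joinedRel tl hd ↑(T.erase f) w j := by
    rcases cover hT hf j with h | h <;> rcases hw with ⟨h1, h2⟩ | ⟨h1, h2⟩
    · exact absurd (h1 ▸ h) hsepf
    · exact h1 ▸ h
    · exact h2 ▸ h
    · exact absurd (h2 ▸ h) hsepf
  have hfTe : f ∈ T.erase e := Finset.mem_erase.mpr ⟨fun h => hne h.symm, hf⟩
  have hiw : joinedRel tl hd ↑(T.erase e) i w := by
    have hedge : joinedRel tl hd ↑(T.erase e) (tl f) (hd f) :=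
      jr_edge (Finset.mem_coe.mpr hfTe)
    rcases hw with ⟨h1, h2⟩ | ⟨h1, h2⟩
    · exact h1 ▸ h2 ▸ hedge
    · exact jr_symm (h1 ▸ h2 ▸ hedge)
  have heTf : e ∈ T.erase f := Finset.mem_erase.mpr ⟨hne, he⟩
  have hrw : (↑(T.erase f) : Set E) = insert e ↑((T.erase f).erase e) := coe_insert_erase heTf
  have hDe : (↑((T.erase f).erase e) : Set E) ⊆ ↑(T.erase e) := by
    rw [Finset.erase_right_comm]
    exact coe_erase_subset _ _
  have hDf : (↑((T.erase f).erase e) : Set E) ⊆ ↑(T.erase f) := coe_erase_subset _ _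
  have hcovw2 := hcovw
  rw [hrw] at hcovw2
  rcases jr_insert hcovw2 with h' | ⟨h1, h2⟩
  · exact hsepe (jr_trans hiw (jr_mono hDe h'))
  · have h1' : joinedRel tl hd ↑((T.erase f).erase e) w i ∨
        joinedRel tl hd ↑((T.erase f).erase e) w u := by
      rcases hu with ⟨ha, hb⟩ | ⟨ha, hb⟩
      · exact h1.imp (fun h => ha ▸ h) (fun h => hb ▸ h)
      · exact (h1.imp (fun h => ha ▸ h) (fun h => hb ▸ h)).symm
    have h2' : joinedRel tl hd ↑((T.erase f).erase e) i j ∨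
        joinedRel tl hd ↑((T.erase f).erase e) u j := by
      rcases hu with ⟨ha, hb⟩ | ⟨ha, hb⟩
      · exact h2.imp (fun h => ha ▸ h) (fun h => hb ▸ h)
      · exact (h2.imp (fun h => ha ▸ h) (fun h => hb ▸ h)).symm
    rcases h2' with h2' | h2'
    · exact hsepe (jr_mono hDe h2')
    rcases h1' with h1' | h1'
    · exact hsepf (jr_trans (jr_symm (jr_mono hDf h1')) hcovw)
    · exact hsepe (jr_trans (jr_trans hiw (jr_mono hDe h1')) hcovu)

end Aux

/-- for a spanning tree `T` and the weights `w e = Σ_{j ∈ T_{h(e)}} θ j`,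
one has `Σ_{e ∈ T, h(e) = i} w e − Σ_{e ∈ T, t(e) = i} w e = θ i` at every vertex `i`. -/
theorem statement8 {V E : Type} [Fintype V] [Nonempty V] [Fintype E]
    (tl hd : E → V) (hQ : IsConn tl hd Set.univ)
    (θ : V → ℝ) (hθ : ∑ i, θ i = 0)
    (T : Finset E) (hT : IsSpanningTree tl hd T) :
    ∀ i : V,
      (∑ e ∈ T.filter fun e => hd e = i,
          ∑ j ∈ component tl hd (T.erase e) (hd e), θ j) -
        (∑ e ∈ T.filter fun e => tl e = i,
          ∑ j ∈ component tl hd (T.erase e) (hd e), θ j) = θ i := by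
  classical
  intro i
  have hbrT : ∀ e ∈ T, ¬ joinedRel tl hd ↑(T.erase e) (tl e) (hd e) := fun e he => bridge hT he
  have key : ∀ s : Finset E,
      (∑ e ∈ s, ∑ j ∈ component tl hd (T.erase e) (hd e), θ j)
        = ∑ j, ((s.filter fun e => joinedRel tl hd ↑(T.erase e) (hd e) j).card : ℝ) * θ j := by
    intro s
    have h1 : ∀ e : E, ∑ j ∈ component tl hd (T.erase e) (hd e), θ j
        = ∑ j, if joinedRel tl hd ↑(T.erase e) (hd e) j then θ j else 0 := by
      intro e
      simp only [component, Finset.sum_filter]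
    calc (∑ e ∈ s, ∑ j ∈ component tl hd (T.erase e) (hd e), θ j)
        = ∑ e ∈ s, ∑ j, if joinedRel tl hd ↑(T.erase e) (hd e) j then θ j else 0 :=
          Finset.sum_congr rfl fun e _ => h1 e
      _ = ∑ j, ∑ e ∈ s, if joinedRel tl hd ↑(T.erase e) (hd e) j then θ j else 0 :=
          Finset.sum_comm
      _ = ∑ j, ((s.filter fun e => joinedRel tl hd ↑(T.erase e) (hd e) j).card : ℝ) * θ j := by
          refine Finset.sum_congr rfl fun j _ => ?_
          rw [← Finset.sum_filter, Finset.sum_const, nsmul_eq_mul]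
  rw [key, key, ← Finset.sum_sub_distrib]
  have hcount : ∀ j : V,
      ((((T.filter fun e => hd e = i).filter
          fun e => joinedRel tl hd ↑(T.erase e) (hd e) j).card : ℝ)) -
        (((T.filter fun e => tl e = i).filter
          fun e => joinedRel tl hd ↑(T.erase e) (hd e) j).card : ℝ)
      = (((T.filter fun e => hd e = i).card : ℝ) - 1) + (if j = i then 1 else 0) := by
    intro j
    by_cases hji : j = i
    · subst hji
      have hn1 : ((T.filter fun e => hd e = j).filter
          fun e => joinedRel tl hd ↑(T.erase e) (hd e) j) = T.filter fun e => hd e = j := by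
        apply Finset.filter_eq_self.mpr
        intro e he
        rw [(Finset.mem_filter.mp he).2]
        exact jr_refl _ _
      have hn2 : ((T.filter fun e => tl e = j).filter
          fun e => joinedRel tl hd ↑(T.erase e) (hd e) j) = ∅ := by
        apply Finset.filter_eq_empty_iff.mpr
        intro e he hcon
        obtain ⟨heT, htl⟩ := Finset.mem_filter.mp he
        exact bridge hT heT (htl ▸ jr_symm hcon)
      rw [hn1, hn2, if_pos rfl]
      simp
    · rw [if_neg hji]
      obtain ⟨e₀, he₀T, hinc₀, hsep₀⟩ :=
        exists_sep T hbrT i j (fun h => hji h.symm) (hT.1 i j)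
      have hSep : ((T.filter fun e => tl e = i ∨ hd e = i).filter
          fun e => ¬ joinedRel tl hd ↑(T.erase e) i j).card = 1 := by
        rw [Finset.card_eq_one]
        refine ⟨e₀, ?_⟩
        ext f
        simp only [Finset.mem_filter, Finset.mem_singleton]
        constructor
        · rintro ⟨⟨hfT, hincf⟩, hsepf⟩
          exact uniq_sep hT hfT he₀T hincf hinc₀ hsepf hsep₀
        · rintro rfl
          exact ⟨⟨he₀T, hinc₀⟩, hsep₀⟩
      have hG : ((T.filter fun e => tl e = i ∨ hd e = i).filter
            fun e => joinedRel tl hd ↑(T.erase e) i j)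
          = ((T.filter fun e => hd e = i).filter
              fun e => joinedRel tl hd ↑(T.erase e) (hd e) j)
            ∪ ((T.filter fun e => tl e = i).filter
              fun e => ¬ joinedRel tl hd ↑(T.erase e) (hd e) j) := by
        ext f
        simp only [Finset.mem_filter, Finset.mem_union]
        constructor
        · rintro ⟨⟨hfT, hincf⟩, hj⟩
          rcases hincf with h | h
          · refine Or.inr ⟨⟨hfT, h⟩, fun hPf => ?_⟩
            exact bridge hT hfT (jr_trans (h ▸ hj) (jr_symm hPf))
          · exact Or.inl ⟨⟨hfT, h⟩, by rw [h]; exact hj⟩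
        · rintro (⟨⟨hfT, h⟩, hPf⟩ | ⟨⟨hfT, h⟩, hPf⟩)
          · exact ⟨⟨hfT, Or.inr h⟩, h ▸ hPf⟩
          · refine ⟨⟨hfT, Or.inl h⟩, ?_⟩
            rcases cover hT hfT j with hc | hc
            · exact h ▸ hc
            · exact absurd hc hPf
      have hdisjAB : Disjoint
          ((T.filter fun e => hd e = i).filter
            fun e => joinedRel tl hd ↑(T.erase e) (hd e) j)
          ((T.filter fun e => tl e = i).filter
            fun e => ¬ joinedRel tl hd ↑(T.erase e) (hd e) j) := by
        rw [Finset.disjoint_left]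
        intro f h1 h2
        obtain ⟨hfT, hhd⟩ := Finset.mem_filter.mp (Finset.mem_filter.mp h1).1
        obtain ⟨-, htl⟩ := Finset.mem_filter.mp (Finset.mem_filter.mp h2).1
        exact no_loop hT hfT (htl.trans hhd.symm)
      have hIAB : (T.filter fun e => tl e = i ∨ hd e = i)
          = (T.filter fun e => tl e = i) ∪ (T.filter fun e => hd e = i) := by
        rw [← Finset.filter_or]
      have hdisjBA : Disjoint (T.filter fun e => tl e = i) (T.filter fun e => hd e = i) := by
        rw [Finset.disjoint_left]
        intro f h1 h2
        obtain ⟨hfT, htl⟩ := Finset.mem_filter.mp h1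
        obtain ⟨-, hhd⟩ := Finset.mem_filter.mp h2
        exact no_loop hT hfT (htl.trans hhd.symm)
      have hIcard : (T.filter fun e => tl e = i).card + (T.filter fun e => hd e = i).card
          = (T.filter fun e => tl e = i ∨ hd e = i).card := by
        rw [hIAB, Finset.card_union_of_disjoint hdisjBA]
      have hGS : ((T.filter fun e => tl e = i ∨ hd e = i).filter
            fun e => joinedRel tl hd ↑(T.erase e) i j).card
          + ((T.filter fun e => tl e = i ∨ hd e = i).filter
            fun e => ¬ joinedRel tl hd ↑(T.erase e) i j).card
          = (T.filter fun e => tl e = i ∨ hd e = i).card :=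
        Finset.card_filter_add_card_filter_not _
      have hBsplit : ((T.filter fun e => tl e = i).filter
            fun e => joinedRel tl hd ↑(T.erase e) (hd e) j).card
          + ((T.filter fun e => tl e = i).filter
            fun e => ¬ joinedRel tl hd ↑(T.erase e) (hd e) j).card
          = (T.filter fun e => tl e = i).card :=
        Finset.card_filter_add_card_filter_not _
      have hN : ((T.filter fun e => hd e = i).filter
            fun e => joinedRel tl hd ↑(T.erase e) (hd e) j).card
          + ((T.filter fun e => tl e = i).filter
            fun e => ¬ joinedRel tl hd ↑(T.erase e) (hd e) j).card
          = ((T.filter fun e => tl e = i ∨ hd e = i).filter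
            fun e => joinedRel tl hd ↑(T.erase e) i j).card := by
        rw [hG, Finset.card_union_of_disjoint hdisjAB]
      have c1 : ((((T.filter fun e => hd e = i).filter
            fun e => joinedRel tl hd ↑(T.erase e) (hd e) j).card : ℝ))
          + (((T.filter fun e => tl e = i).filter
            fun e => ¬ joinedRel tl hd ↑(T.erase e) (hd e) j).card : ℝ)
          = (((T.filter fun e => tl e = i ∨ hd e = i).filter
            fun e => joinedRel tl hd ↑(T.erase e) i j).card : ℝ) := by
        exact_mod_cast congrArg (Nat.cast : ℕ → ℝ) hN
      have c2 : (((T.filter fun e => tl e = i ∨ hd e = i).filter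
            fun e => joinedRel tl hd ↑(T.erase e) i j).card : ℝ) + 1
          = (((T.filter fun e => tl e = i ∨ hd e = i).card : ℝ)) := by
        rw [← hGS, hSep]
        push_cast
        ring
      have c3 : (((T.filter fun e => tl e = i).card : ℝ))
          + (((T.filter fun e => hd e = i).card : ℝ))
          = (((T.filter fun e => tl e = i ∨ hd e = i).card : ℝ)) := by
        exact_mod_cast congrArg (Nat.cast : ℕ → ℝ) hIcard
      have c4 : ((((T.filter fun e => tl e = i).filter
            fun e => joinedRel tl hd ↑(T.erase e) (hd e) j).card : ℝ))
          + (((T.filter fun e => tl e = i).filter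
            fun e => ¬ joinedRel tl hd ↑(T.erase e) (hd e) j).card : ℝ)
          = (((T.filter fun e => tl e = i).card : ℝ)) := by
        exact_mod_cast congrArg (Nat.cast : ℕ → ℝ) hBsplit
      linarith
  calc (∑ j, ((((T.filter fun e => hd e = i).filter
          fun e => joinedRel tl hd ↑(T.erase e) (hd e) j).card : ℝ) * θ j
        - (((T.filter fun e => tl e = i).filter
          fun e => joinedRel tl hd ↑(T.erase e) (hd e) j).card : ℝ) * θ j))
      = ∑ j, (((((T.filter fun e => hd e = i).card : ℝ) - 1) * θ j)
          + (if j = i then 1 else 0) * θ j) := by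
        refine Finset.sum_congr rfl fun j _ => ?_
        rw [← sub_mul, hcount j, add_mul]
    _ = (((T.filter fun e => hd e = i).card : ℝ) - 1) * (∑ j, θ j)
        + ∑ j, (if j = i then 1 else 0) * θ j := by
        rw [Finset.sum_add_distrib, Finset.mul_sum]
    _ = θ i := by
        rw [hθ, mul_zero, zero_add]
        simp

end
end

section
/- Let Q be a connected quiver, θ : V → ℝ, T a spanning tree of Q, e ∈ T, and e' ∈ T with e' ≠ e. Then the set (T ∖ {e})_{h(e')} computed in the contracted quiver Q/e (with spanning tree T ∖ {e}) equals the image under the quotient map V → V/e of the set T_{h(e')} computed in Q. Consequently Σ_{j ∈ (T∖{e})_{h(e')}} (θ/e)_j = Σ_{j ∈ T_{h(e')}} θ_j; in particular, if θ is generic then e' is θ/e-forward in T ∖ {e} if and only if e' is θ-forward in T. -/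
open Classical Finset

noncomputable section

section MyAux

variable {V E : Type}

lemma my_cProj_eq_iff {a b : V} (h : b ≠ a) {v w : V} :
    cProj a b h v = cProj a b h w ↔ v = w ∨ (v = a ∧ w = b) ∨ (v = b ∧ w = a) := by
  unfold cProj
  constructor
  · intro hvw
    split_ifs at hvw with hv hw hw <;> simp only [Subtype.mk.injEq] at hvw
    · exact Or.inl (hv.trans hw.symm)
    · exact Or.inr (Or.inl ⟨hv, hvw.symm⟩)
    · exact Or.inr (Or.inr ⟨hvw, hw⟩)
    · exact Or.inl hvw
  · rintro (rfl | ⟨rfl, rfl⟩ | ⟨rfl, rfl⟩)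
    · rfl
    · rw [dif_pos rfl, dif_neg h]
    · rw [dif_pos rfl, dif_neg h]

lemma my_cProj_self (tl hd : E → V) (e : E) (h : hd e ≠ tl e) (j : {j : V // j ≠ tl e}) :
    cProj (tl e) (hd e) h j.1 = j := by
  simp [cProj, j.2]

lemma my_joined_of_cProj_eq (tl hd : E → V) (e : E) (D : Set E) (heD : e ∈ D)
    (h : hd e ≠ tl e) {v w : V}
    (hvw : cProj (tl e) (hd e) h v = cProj (tl e) (hd e) h w) :
    joinedRel tl hd D v w := by
  rcases (my_cProj_eq_iff h).1 hvw with rfl | ⟨rfl, rfl⟩ | ⟨rfl, rfl⟩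
  · exact Relation.EqvGen.refl _
  · exact Relation.EqvGen.rel _ _ ⟨e, heD, Or.inl ⟨rfl, rfl⟩⟩
  · exact Relation.EqvGen.symm _ _ (Relation.EqvGen.rel _ _ ⟨e, heD, Or.inl ⟨rfl, rfl⟩⟩)

lemma my_joined_forward (tl hd : E → V) (e : E) (h : hd e ≠ tl e) (D : Set E)
    (D' : Set {f : E // f ≠ e})
    (hD : ∀ f : E, (hf : f ≠ e) → f ∈ D → (⟨f, hf⟩ : {f : E // f ≠ e}) ∈ D')
    {v w : V} (hvw : joinedRel tl hd D v w) :
    joinedRel (contractTl tl hd e h) (contractHd tl hd e h) D'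
      (cProj (tl e) (hd e) h v) (cProj (tl e) (hd e) h w) := by
  induction hvw with
  | rel a b hab =>
      obtain ⟨f, hf, hor⟩ := hab
      by_cases hfe : f = e
      · subst hfe
        have hpe : cProj (tl f) (hd f) h (tl f) = cProj (tl f) (hd f) h (hd f) := by
          simp [cProj, h]
        rcases hor with ⟨rfl, rfl⟩ | ⟨rfl, rfl⟩
        · rw [hpe]; exact Relation.EqvGen.refl _
        · rw [← hpe]; exact Relation.EqvGen.refl _
      · refine Relation.EqvGen.rel _ _ ⟨⟨f, hfe⟩, hD f hfe hf, ?_⟩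
        rcases hor with ⟨rfl, rfl⟩ | ⟨rfl, rfl⟩
        · exact Or.inl ⟨rfl, rfl⟩
        · exact Or.inr ⟨rfl, rfl⟩
  | refl a => exact Relation.EqvGen.refl _
  | symm a b _ ih => exact Relation.EqvGen.symm _ _ ih
  | trans a b c _ _ ih1 ih2 => exact Relation.EqvGen.trans _ _ _ ih1 ih2

lemma my_joined_backward (tl hd : E → V) (e : E) (h : hd e ≠ tl e) (D : Set E)
    (heD : e ∈ D) (D' : Set {f : E // f ≠ e})
    (hD : ∀ f : {f : E // f ≠ e}, f ∈ D' → f.1 ∈ D)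
    {u v : {j : V // j ≠ tl e}}
    (huv : joinedRel (contractTl tl hd e h) (contractHd tl hd e h) D' u v) :
    ∀ x y : V, cProj (tl e) (hd e) h x = u → cProj (tl e) (hd e) h y = v →
      joinedRel tl hd D x y := by
  induction huv with
  | rel a b hab =>
      intro x y hx hy
      obtain ⟨g, hg, hor⟩ := hab
      have h1 : joinedRel tl hd D (tl g.1) (hd g.1) :=
        Relation.EqvGen.rel _ _ ⟨g.1, hD g hg, Or.inl ⟨rfl, rfl⟩⟩
      rcases hor with ⟨ha, hb⟩ | ⟨ha, hb⟩
      · have hx' : cProj (tl e) (hd e) h x = cProj (tl e) (hd e) h (tl g.1) := by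
          rw [hx, ← ha]; rfl
        have hy' : cProj (tl e) (hd e) h y = cProj (tl e) (hd e) h (hd g.1) := by
          rw [hy, ← hb]; rfl
        exact Relation.EqvGen.trans _ _ _
          (Relation.EqvGen.trans _ _ _ (my_joined_of_cProj_eq tl hd e D heD h hx') h1)
          (Relation.EqvGen.symm _ _ (my_joined_of_cProj_eq tl hd e D heD h hy'))
      · have hx' : cProj (tl e) (hd e) h x = cProj (tl e) (hd e) h (hd g.1) := by
          rw [hx, ← hb]; rfl
        have hy' : cProj (tl e) (hd e) h y = cProj (tl e) (hd e) h (tl g.1) := by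
          rw [hy, ← ha]; rfl
        exact Relation.EqvGen.trans _ _ _
          (Relation.EqvGen.trans _ _ _ (my_joined_of_cProj_eq tl hd e D heD h hx')
            (Relation.EqvGen.symm _ _ h1))
          (Relation.EqvGen.symm _ _ (my_joined_of_cProj_eq tl hd e D heD h hy'))
  | refl a =>
      intro x y hx hy
      exact my_joined_of_cProj_eq tl hd e D heD h (hx.trans hy.symm)
  | symm a b _ ih =>
      intro x y hx hy
      exact Relation.EqvGen.symm _ _ (ih y x hy hx)
  | trans a b c _ _ ih1 ih2 =>
      intro x y hx hy
      exact Relation.EqvGen.trans _ _ _ (ih1 x b.1 hx (my_cProj_self tl hd e h b))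
        (ih2 b.1 y (my_cProj_self tl hd e h b) hy)

end MyAux

/-- components of tree edges are compatible with contraction: for `e ≠ e'`
in a spanning tree `T`, the component `(T∖{e})_{h(e')}` computed in `Q/e` is the image
under the quotient map of `T_{h(e')}`; consequently the `θ/e`-weight of `e'` in `T∖{e}`
equals its `θ`-weight in `T`, and for generic `θ` the edge `e'` is `θ/e`-forward in
`T∖{e}` iff it is `θ`-forward in `T`. -/
theorem statement9 {V E : Type} [Fintype V] [Nonempty V] [Fintype E]
    [DecidableEq V] [DecidableEq E]
    (tl hd : E → V) (hQ : IsConn tl hd Set.univ) (θ : V → ℝ)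
    (T : Finset E) (hT : IsSpanningTree tl hd T)
    (e : E) (he : e ∈ T) (hloop : hd e ≠ tl e)
    (e' : E) (he' : e' ∈ T) (hne : e' ≠ e) :
    component (contractTl tl hd e hloop) (contractHd tl hd e hloop)
        (((T.erase e).subtype fun f => f ≠ e).erase ⟨e', hne⟩)
        (cProj (tl e) (hd e) hloop (hd e'))
      = (component tl hd (T.erase e') (hd e')).image (cProj (tl e) (hd e) hloop) ∧
    (∑ j ∈ component (contractTl tl hd e hloop) (contractHd tl hd e hloop)
        (((T.erase e).subtype fun f => f ≠ e).erase ⟨e', hne⟩)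
        (cProj (tl e) (hd e) hloop (hd e')), contractParam (tl e) (hd e) θ j)
      = ∑ j ∈ component tl hd (T.erase e') (hd e'), θ j ∧
    (Generic θ →
      ((0 < ∑ j ∈ component (contractTl tl hd e hloop) (contractHd tl hd e hloop)
          (((T.erase e).subtype fun f => f ≠ e).erase ⟨e', hne⟩)
          (cProj (tl e) (hd e) hloop (hd e')), contractParam (tl e) (hd e) θ j) ↔
        (0 < ∑ j ∈ component tl hd (T.erase e') (hd e'), θ j))) := by
  set π := cProj (tl e) (hd e) hloop with hπ
  set C := component tl hd (T.erase e') (hd e') with hC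
  have heD : e ∈ (↑(T.erase e') : Set E) := by
    simp [Finset.mem_erase, he, hne.symm]
  have hD : ∀ f : E, (hf : f ≠ e) → f ∈ (↑(T.erase e') : Set E) →
      (⟨f, hf⟩ : {f : E // f ≠ e}) ∈
        (↑((((T.erase e).subtype fun f => f ≠ e)).erase ⟨e', hne⟩) :
          Set {f : E // f ≠ e}) := by
    intro f hf hfD
    simp only [Finset.mem_coe, Finset.mem_erase] at hfD
    simp only [Finset.mem_coe, Finset.mem_erase, Finset.mem_subtype, ne_eq,
      Subtype.mk.injEq]
    exact ⟨hfD.1, hf, hfD.2⟩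
  have hDrev : ∀ f : {f : E // f ≠ e},
      f ∈ (↑((((T.erase e).subtype fun f => f ≠ e)).erase ⟨e', hne⟩) :
        Set {f : E // f ≠ e}) → f.1 ∈ (↑(T.erase e') : Set E) := by
    intro f hf
    simp only [Finset.mem_coe, Finset.mem_erase, Finset.mem_subtype, ne_eq,
      Subtype.ext_iff] at hf
    simp only [Finset.mem_coe, Finset.mem_erase]
    exact ⟨hf.1, hf.2.2⟩
  have part1 : component (contractTl tl hd e hloop) (contractHd tl hd e hloop)
      (((T.erase e).subtype fun f => f ≠ e).erase ⟨e', hne⟩) (π (hd e'))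
      = C.image π := by
    ext a
    simp only [component, Finset.mem_filter, Finset.mem_univ, true_and,
      Finset.mem_image, hC]
    constructor
    · intro ha
      exact ⟨a.1, my_joined_backward tl hd e hloop _ heD _ hDrev ha (hd e') a.1 rfl
        (my_cProj_self tl hd e hloop a), my_cProj_self tl hd e hloop a⟩
    · rintro ⟨w, hw, rfl⟩
      exact my_joined_forward tl hd e hloop _ _ hD hw
  have hmemiff : tl e ∈ C ↔ hd e ∈ C := by
    have hj : joinedRel tl hd (↑(T.erase e')) (tl e) (hd e) :=
      Relation.EqvGen.rel _ _ ⟨e, heD, Or.inl ⟨rfl, rfl⟩⟩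
    simp only [hC, component, Finset.mem_filter, Finset.mem_univ, true_and]
    exact ⟨fun h => Relation.EqvGen.trans _ _ _ h hj,
      fun h => Relation.EqvGen.trans _ _ _ h (Relation.EqvGen.symm _ _ hj)⟩
  have part2 : (∑ j ∈ C.image π, contractParam (tl e) (hd e) θ j) = ∑ j ∈ C, θ j := by
    by_cases htl : tl e ∈ C
    · have hhd : hd e ∈ C := hmemiff.1 htl
      have himg : C.image π = (C.erase (tl e)).image π := by
        apply Finset.Subset.antisymm
        · intro a ha
          obtain ⟨w, hw, rfl⟩ := Finset.mem_image.1 ha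
          by_cases hwtl : w = tl e
          · subst hwtl
            refine Finset.mem_image.2 ⟨hd e, Finset.mem_erase.2 ⟨hloop, hhd⟩, ?_⟩
            simp [π, cProj, hloop]
          · exact Finset.mem_image.2 ⟨w, Finset.mem_erase.2 ⟨hwtl, hw⟩, rfl⟩
        · exact Finset.image_subset_image (Finset.erase_subset _ _)
      have hinj : ∀ x ∈ C.erase (tl e), ∀ y ∈ C.erase (tl e), π x = π y → x = y := by
        intro x hx y hy hxy
        rcases (my_cProj_eq_iff hloop).1 hxy with h' | ⟨h', _⟩ | ⟨_, h'⟩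
        · exact h'
        · exact absurd h' (Finset.mem_erase.1 hx).1
        · exact absurd h' (Finset.mem_erase.1 hy).1
      rw [himg, Finset.sum_image hinj]
      have hcongr : ∀ v ∈ C.erase (tl e), contractParam (tl e) (hd e) θ (π v)
          = θ v + (if v = hd e then θ (tl e) else 0) := by
        intro v hv
        have hvtl : v ≠ tl e := (Finset.mem_erase.1 hv).1
        simp only [π, cProj, dif_neg hvtl, contractParam]
        by_cases hvh : v = hd e <;> simp [hvh] <;> ring
      rw [Finset.sum_congr rfl hcongr, Finset.sum_add_distrib,
        Finset.sum_ite_eq' (C.erase (tl e)) (hd e) (fun _ => θ (tl e)),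
        if_pos (Finset.mem_erase.2 ⟨hloop, hhd⟩), ← Finset.add_sum_erase C θ htl]
      ring
    · have hhd : hd e ∉ C := fun h => htl (hmemiff.2 h)
      have hinj : ∀ x ∈ C, ∀ y ∈ C, π x = π y → x = y := by
        intro x hx y hy hxy
        rcases (my_cProj_eq_iff hloop).1 hxy with h' | ⟨h', _⟩ | ⟨_, h'⟩
        · exact h'
        · exact absurd (h' ▸ hx) htl
        · exact absurd (h' ▸ hy) htl
      rw [Finset.sum_image hinj]
      apply Finset.sum_congr rfl
      intro v hv
      have hvtl : v ≠ tl e := fun h' => htl (h' ▸ hv)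
      have hvhd : v ≠ hd e := fun h' => hhd (h' ▸ hv)
      simp [π, cProj, dif_neg hvtl, contractParam, hvhd]
  refine ⟨part1, ?_, ?_⟩
  · rw [part1]; exact part2
  · intro _
    rw [part1, part2]

end
end

section
/- Let Q be a connected quiver, k a field, θ : V → ℝ generic with Σ_{i∈V} θ_i = 0, and (x, x*) a θ-stable toric representation of the double quiver of Q. Let e ∈ E and suppose the restriction of (x, x*) to E ∖ {e} is not θ-stable; call a subset J ⊆ V destabilising if ∅ ≠ J ⊊ V, J is closed for the restriction of (x, x*) to E ∖ {e}, and Σ_{i∈J} θ_i ≤ 0. Then: (i) a destabilising subset exists, and every destabilising subset contains exactly one of t(e), h(e); (ii) all destabilising subsets contain the same endpoint of e; (iii) if every destabilising subset contains t(e) then x_e ≠ 0, and if every destabilising subset contains h(e) then x*_e ≠ 0. -/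
open Classical Finset

noncomputable section

private lemma closedOn_inter {V E k : Type} [Zero k] [DecidableEq V] (tl hd : E → V)
    (x xs : E → k) (S : Set E) (J J' : Finset V)
    (h : ClosedOn tl hd x xs S J) (h' : ClosedOn tl hd x xs S J') :
    ClosedOn tl hd x xs S (J ∩ J') := by
  intro f hf
  obtain ⟨h1, h2⟩ := h f hf
  obtain ⟨h1', h2'⟩ := h' f hf
  refine ⟨fun hx ht => ?_, fun hx ht => ?_⟩ <;>
    simp only [Finset.mem_inter] at *
  · exact ⟨h1 hx ht.1, h1' hx ht.2⟩
  · exact ⟨h2 hx ht.1, h2' hx ht.2⟩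

private lemma closedOn_union {V E k : Type} [Zero k] [DecidableEq V] (tl hd : E → V)
    (x xs : E → k) (S : Set E) (J J' : Finset V)
    (h : ClosedOn tl hd x xs S J) (h' : ClosedOn tl hd x xs S J') :
    ClosedOn tl hd x xs S (J ∪ J') := by
  intro f hf
  obtain ⟨h1, h2⟩ := h f hf
  obtain ⟨h1', h2'⟩ := h' f hf
  refine ⟨fun hx ht => ?_, fun hx ht => ?_⟩ <;>
    simp only [Finset.mem_union] at *
  · exact ht.imp (h1 hx) (h1' hx)
  · exact ht.imp (h2 hx) (h2' hx)

/-- if `(x, xs)` is `θ`-stable but its restriction to `E ∖ {e}` is not,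
then destabilising subsets exist, each contains exactly one endpoint of `e`, they all
contain the same endpoint, and the corresponding linear map on `e` is nonzero. -/
theorem statement11 {V E : Type} [Fintype V] [Nonempty V] [Fintype E]
    (tl hd : E → V) (hQ : IsConn tl hd Set.univ)
    (k : Type) [Field k]
    (θ : V → ℝ) (hgen : Generic θ) (hθ : ∑ i, θ i = 0)
    (x xs : E → k)
    (hstab : StableSub tl hd θ x xs Finset.univ Set.univ)
    (e : E)
    (hunst : ¬ StableSub tl hd θ x xs Finset.univ {f | f ≠ e}) :
    (∃ J, DestabSub tl hd θ x xs Finset.univ {f | f ≠ e} J) ∧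
    (∀ J, DestabSub tl hd θ x xs Finset.univ {f | f ≠ e} J →
      (tl e ∈ J ∧ hd e ∉ J) ∨ (tl e ∉ J ∧ hd e ∈ J)) ∧
    ((∀ J, DestabSub tl hd θ x xs Finset.univ {f | f ≠ e} J → tl e ∈ J) ∨
      (∀ J, DestabSub tl hd θ x xs Finset.univ {f | f ≠ e} J → hd e ∈ J)) ∧
    ((∀ J, DestabSub tl hd θ x xs Finset.univ {f | f ≠ e} J → tl e ∈ J) → x e ≠ 0) ∧
    ((∀ J, DestabSub tl hd θ x xs Finset.univ {f | f ≠ e} J → hd e ∈ J) → xs e ≠ 0) := by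
  classical
  -- existence of a destabilising subset
  have hunst' := hunst
  unfold StableSub at hunst'
  push_neg at hunst'
  obtain ⟨J₀, hJ₀sub, hJ₀cl, hJ₀ne, hJ₀nuniv, hJ₀sum⟩ := hunst'
  have hex : DestabSub tl hd θ x xs Finset.univ {f | f ≠ e} J₀ :=
    ⟨hJ₀sub, hJ₀ne, hJ₀nuniv, hJ₀cl, hJ₀sum⟩
  -- every destabilising subset fails closedness exactly at e
  have key : ∀ J, DestabSub tl hd θ x xs Finset.univ {f | f ≠ e} J →
      (x e ≠ 0 ∧ tl e ∈ J ∧ hd e ∉ J) ∨ (xs e ≠ 0 ∧ hd e ∈ J ∧ tl e ∉ J) := by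
    rintro J ⟨hsub, hne, hnuniv, hcl, hsum⟩
    by_contra hc
    push_neg at hc
    obtain ⟨hc1, hc2⟩ := hc
    have hclu : ClosedOn tl hd x xs Set.univ J := by
      intro f _
      by_cases hf : f = e
      · subst hf
        exact ⟨fun hx ht => hc1 hx ht, fun hx ht => hc2 hx ht⟩
      · exact hcl f hf
    have := hstab J hsub hclu hne hnuniv
    linarith
  -- sums are strictly negative by genericity
  have hneg : ∀ J, DestabSub tl hd θ x xs Finset.univ {f | f ≠ e} J →
      ∑ i ∈ J, θ i < 0 := by
    rintro J ⟨hsub, hne, hnuniv, hcl, hsum⟩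
    exact lt_of_le_of_ne hsum (hgen J hne hnuniv)
  -- all destabilising subsets contain the same endpoint
  have hsame : (∀ J, DestabSub tl hd θ x xs Finset.univ {f | f ≠ e} J → tl e ∈ J) ∨
      (∀ J, DestabSub tl hd θ x xs Finset.univ {f | f ≠ e} J → hd e ∈ J) := by
    by_contra hc
    push_neg at hc
    obtain ⟨⟨J, hJ, hJt⟩, ⟨J', hJ', hJ'h⟩⟩ := hc
    -- J contains hd e but not tl e ; J' contains tl e but not hd e
    have hJcase : xs e ≠ 0 ∧ hd e ∈ J ∧ tl e ∉ J := by
      rcases key J hJ with h | h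
      · exact absurd h.2.1 hJt
      · exact h
    have hJ'case : x e ≠ 0 ∧ tl e ∈ J' ∧ hd e ∉ J' := by
      rcases key J' hJ' with h | h
      · exact h
      · exact absurd h.2.1 hJ'h
    obtain ⟨-, hhdJ, htlJ⟩ := hJcase
    obtain ⟨-, htlJ', hhdJ'⟩ := hJ'case
    -- intersection and union are closed for the full edge set
    have hclI : ClosedOn tl hd x xs Set.univ (J ∩ J') := by
      intro f _
      by_cases hf : f = e
      · subst hf
        refine ⟨fun _ ht => absurd (Finset.mem_inter.1 ht).1 htlJ,
                fun _ ht => absurd (Finset.mem_inter.1 ht).2 hhdJ'⟩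
      · exact closedOn_inter tl hd x xs {f | f ≠ e} J J' hJ.2.2.2.1 hJ'.2.2.2.1 f hf
    have hclU : ClosedOn tl hd x xs Set.univ (J ∪ J') := by
      intro f _
      by_cases hf : f = e
      · subst hf
        refine ⟨fun _ _ => Finset.mem_union_left _ hhdJ,
                fun _ _ => Finset.mem_union_right _ htlJ'⟩
      · exact closedOn_union tl hd x xs {f | f ≠ e} J J' hJ.2.2.2.1 hJ'.2.2.2.1 f hf
    -- sums
    have hIsum : 0 ≤ ∑ i ∈ J ∩ J', θ i := by
      rcases Finset.eq_empty_or_nonempty (J ∩ J') with h | h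
      · simp [h]
      · have hni : J ∩ J' ≠ Finset.univ := by
          intro hu
          exact htlJ (Finset.mem_inter.1 (hu ▸ Finset.mem_univ (tl e))).1
        exact le_of_lt (hstab _ (Finset.subset_univ _) hclI h hni)
    have hUsum : 0 ≤ ∑ i ∈ J ∪ J', θ i := by
      by_cases h : J ∪ J' = Finset.univ
      · rw [h]; exact le_of_eq hθ.symm
      · exact le_of_lt (hstab _ (Finset.subset_univ _) hclU
          (hJ.2.1.mono Finset.subset_union_left) h)
    have hsum2 : ∑ i ∈ J ∪ J', θ i + ∑ i ∈ J ∩ J', θ i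
        = ∑ i ∈ J, θ i + ∑ i ∈ J', θ i := Finset.sum_union_inter
    have := hneg J hJ
    have := hneg J' hJ'
    linarith
  refine ⟨⟨J₀, hex⟩, ?_, hsame, ?_, ?_⟩
  · intro J hJ
    rcases key J hJ with h | h
    · exact Or.inl ⟨h.2.1, h.2.2⟩
    · exact Or.inr ⟨h.2.2, h.2.1⟩
  · intro hall
    rcases key J₀ hex with h | h
    · exact h.1
    · exact absurd (hall J₀ hex) h.2.2
  · intro hall
    rcases key J₀ hex with h | h
    · exact absurd (hall J₀ hex) h.2.2
    · exact h.1


end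
end
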